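/- arXiv:2508.19608 — 8 statements merged into one kernel-verified Lean document; each statement's English description precedes it below -/
import Mathlib

section
/- For every real x ≥ 0, x·(1 - tanh(x)) ≤ 0.2785. -/
open Real

lemma exp_num_key : (1 : ℝ) ≤ 0.2785 * Real.exp 1.2785 := by
  have h1 : (2.7182818283 : ℝ) < Real.exp 1 := Real.exp_one_gt_d9
  have h2 : ∑ i ∈ Finset.range 5, (0.2785 : ℝ) ^ i / (Nat.factorial i) ≤ Real.exp 0.2785 :=
    Real.sum_le_exp_of_nonneg (by norm_num) 5
  have h3 : Real.exp 1.2785 = Real.exp 1 * Real.exp 0.2785 := by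
    rw [← Real.exp_add]; norm_num
  have h4 : (1.32113196871 : ℝ) ≤ Real.exp 0.2785 := by
    refine le_trans ?_ h2
    norm_num [Finset.sum_range_succ, Nat.factorial]
  rw [h3]
  nlinarith [Real.exp_pos (0.2785 : ℝ), Real.exp_pos (1 : ℝ)]

lemma key (t : ℝ) : t ≤ 0.2785 * Real.exp t + 0.2785 := by
  rcases le_or_gt t 0.2785 with h | h
  · nlinarith [Real.exp_pos t]
  · have h1 : Real.exp t = Real.exp 1.2785 * Real.exp (t - 1.2785) := by
      rw [← Real.exp_add]; ring_nf
    have h2 : (t - 1.2785) + 1 ≤ Real.exp (t - 1.2785) := Real.add_one_le_exp _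
    have h3 := exp_num_key
    have h4 : (0 : ℝ) < Real.exp 1.2785 := Real.exp_pos _
    nlinarith

theorem mul_one_sub_tanh_le (x : ℝ) (hx : 0 ≤ x) :
    x * (1 - Real.tanh x) ≤ 0.2785 := by
  have hc : (0 : ℝ) < Real.cosh x := Real.cosh_pos x
  have h1 : 1 - Real.tanh x = Real.exp (-x) / Real.cosh x := by
    rw [Real.tanh_eq_sinh_div_cosh, ← Real.cosh_sub_sinh]
    field_simp
  rw [h1, ← mul_div_assoc, div_le_iff₀ hc, Real.cosh_eq]
  have hk := key (2 * x)
  have he : Real.exp (2 * x) = Real.exp x * Real.exp x := by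
    rw [← Real.exp_add]; ring_nf
  have hinv : Real.exp (-x) * Real.exp x = 1 := by
    rw [← Real.exp_add]; simp
  have hp : (0 : ℝ) < Real.exp x := Real.exp_pos x
  have hn : (0 : ℝ) < Real.exp (-x) := Real.exp_pos _
  nlinarith [mul_pos hn hp]
end

section
/- Let α: [0,∞) → [0,∞) be a continuous, strictly increasing, unbounded function with α(0) = 0 (a class-K∞ function), and let c_s be a constant. Suppose s: [0,∞) → ℝ is differentiable and satisfies ṡ(t) ≤ -α(s(t)) + α(c_s) for all t ≥ 0 (with α extended appropriately if s takes negative values, e.g., by odd extension). Then there exists a class-KL function β such that s(t) ≤ β(s(0) - c_s, t) + c_s for all t ≥ 0. -/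
open Set Filter

lemma inv_lemma (α : ℝ → ℝ) (hmono : StrictMono α)
    (c_s : ℝ) (s s' : ℝ → ℝ)
    (hs : ∀ t, 0 ≤ t → HasDerivAt s (s' t) t)
    (hineq : ∀ t, 0 ≤ t → s' t ≤ -α (s t) + α c_s)
    (K : ℝ) (hK : c_s ≤ K) (a : ℝ) (ha : 0 ≤ a) (hsa : s a ≤ K) :
    ∀ b, a ≤ b → s b ≤ K := by
  intro b hab
  by_contra hb
  push_neg at hb
  have hcontS : ContinuousOn s (Icc a b) := fun t ht =>
    ((hs t (le_trans ha ht.1)).continuousAt).continuousWithinAt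
  have hlt : a < b := by
    rcases lt_or_eq_of_le hab with h | h
    · exact h
    · exact absurd (h ▸ hsa) (not_le.2 hb)
  set E : Set ℝ := Icc a b ∩ s ⁻¹' Iic K with hE
  have hEne : E.Nonempty := ⟨a, ⟨le_refl a, le_of_lt hlt⟩, hsa⟩
  have hEbdd : BddAbove E := ⟨b, fun x hx => hx.1.2⟩
  have hEclosed : IsClosed E :=
    hcontS.preimage_isClosed_of_isClosed isClosed_Icc isClosed_Iic
  have hcmem : sSup E ∈ E := hEclosed.csSup_mem hEne hEbdd
  set c := sSup E with hc
  have hca : a ≤ c := hcmem.1.1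
  have hcb : c ≤ b := hcmem.1.2
  have hscK : s c ≤ K := hcmem.2
  have hcb' : c < b := lt_of_le_of_ne hcb (by intro h; rw [h] at hscK; exact absurd hscK (not_le.2 hb))
  have hgt : ∀ t ∈ Ioo c b, K < s t := by
    intro t ht
    by_contra h
    push_neg at h
    have : t ∈ E := ⟨⟨le_trans hca ht.1.le, ht.2.le⟩, h⟩
    exact absurd (le_csSup hEbdd this) (not_le.2 ht.1)
  have hanti : AntitoneOn s (Icc c b) := by
    apply antitoneOn_of_deriv_nonpos (convex_Icc c b)
      (hcontS.mono (Icc_subset_Icc hca le_rfl))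
    · intro t ht
      rw [interior_Icc] at ht
      exact ((hs t (le_trans (le_trans ha hca) ht.1.le)).differentiableAt).differentiableWithinAt
    · intro t ht
      rw [interior_Icc] at ht
      have ht0 : (0:ℝ) ≤ t := le_trans (le_trans ha hca) ht.1.le
      rw [(hs t ht0).deriv]
      have h1 : α c_s ≤ α (s t) :=
        hmono.monotone (le_trans hK (hgt t ht).le)
      linarith [hineq t ht0]
  have := hanti ⟨le_rfl, hcb'.le⟩ ⟨hcb'.le, le_rfl⟩ hcb'.le
  linarith

lemma tail_lemma (α : ℝ → ℝ) (hmono : StrictMono α)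
    (c_s : ℝ) (s s' : ℝ → ℝ)
    (hs : ∀ t, 0 ≤ t → HasDerivAt s (s' t) t)
    (hineq : ∀ t, 0 ≤ t → s' t ≤ -α (s t) + α c_s)
    (ε : ℝ) (hε : 0 < ε) :
    ∃ T, 0 ≤ T ∧ ∀ t, T ≤ t → s t ≤ c_s + ε := by
  set M := max (s 0) c_s with hM
  have hMc : c_s ≤ M := le_max_right _ _
  set δ := α (c_s + ε) - α c_s with hδ
  have hδpos : 0 < δ := sub_pos.2 (hmono (by linarith))
  have hquot : 0 ≤ (M - c_s) / δ := div_nonneg (by linarith) hδpos.le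
  set T := (M - c_s) / δ + 1 with hT
  have hT0 : 0 ≤ T := by rw [hT]; linarith
  -- suffices to find one time ≤ T where s dips below c_s + ε
  by_cases hdip : ∃ t₀, 0 ≤ t₀ ∧ t₀ ≤ T ∧ s t₀ ≤ c_s + ε
  · obtain ⟨t₀, h0, hle, hst⟩ := hdip
    refine ⟨T, hT0, fun t ht => ?_⟩
    exact inv_lemma α hmono c_s s s' hs hineq (c_s + ε) (by linarith) t₀ h0 hst t
      (le_trans hle ht)
  · push_neg at hdip
    exfalso
    have hgt : ∀ t, 0 ≤ t → t ≤ T → c_s + ε < s t := fun t h1 h2 => hdip t h1 h2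
    -- h t := s t + δ t is antitone on [0, T]
    have hanti : AntitoneOn (fun t => s t + δ * t) (Icc 0 T) := by
      apply antitoneOn_of_deriv_nonpos (convex_Icc 0 T)
      · exact fun t ht => (((hs t ht.1).add ((hasDerivAt_id t).const_mul δ)).continuousAt).continuousWithinAt
      · intro t ht
        rw [interior_Icc] at ht
        exact (((hs t ht.1.le).add ((hasDerivAt_id t).const_mul δ)).differentiableAt).differentiableWithinAt
      · intro t ht
        rw [interior_Icc] at ht
        have hd : HasDerivAt (fun t => s t + δ * t) (s' t + δ * 1) t :=
          (hs t ht.1.le).add ((hasDerivAt_id t).const_mul δ)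
        rw [hd.deriv]
        have h1 : α (c_s + ε) ≤ α (s t) := hmono.monotone (hgt t ht.1.le ht.2.le).le
        have h2 := hineq t ht.1.le
        simp only [mul_one]
        linarith
    have h1 := hanti (left_mem_Icc.2 hT0) (right_mem_Icc.2 hT0) hT0
    simp only [mul_zero, add_zero] at h1
    -- s T + δ T ≤ s 0 ≤ M, so s T ≤ M - δ T = c_s - δ < c_s + ε
    have hs0 : s 0 ≤ M := le_max_left _ _
    have hδT : δ * T = M - c_s + δ := by
      rw [hT, mul_add, mul_one, mul_div_assoc', mul_comm δ, mul_div_assoc, div_self hδpos.ne', mul_one]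
    have := hgt T hT0 le_rfl
    nlinarith

theorem comparison_KL
    (α : ℝ → ℝ) (hcont : Continuous α) (hmono : StrictMono α)
    (h0 : α 0 = 0) (hodd : ∀ x, α (-x) = -α x)
    (hunb : Filter.Tendsto α Filter.atTop Filter.atTop)
    (c_s : ℝ) (s s' : ℝ → ℝ)
    (hs : ∀ t, 0 ≤ t → HasDerivAt s (s' t) t)
    (hineq : ∀ t, 0 ≤ t → s' t ≤ -α (s t) + α c_s) :
    ∃ β : ℝ → ℝ → ℝ,
      Continuous (Function.uncurry β) ∧
      (∀ t, 0 ≤ t → StrictMonoOn (fun r => β r t) (Set.Ici 0) ∧ β 0 t = 0) ∧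
      (∀ r, 0 ≤ r → (AntitoneOn (fun t => β r t) (Set.Ici 0) ∧
        Filter.Tendsto (fun t => β r t) Filter.atTop (nhds 0))) ∧
      ∀ t, 0 ≤ t → s t ≤ β (s 0 - c_s) t + c_s := by
  classical
  set M := max (s 0) c_s with hM
  have hMbound : ∀ t, 0 ≤ t → s t ≤ M :=
    fun t ht => inv_lemma α hmono c_s s s' hs hineq M (le_max_right _ _) 0 le_rfl
      (le_max_left _ _) t ht
  -- the running sup of (s - c_s) over the future
  set d : ℝ → ℝ := fun t => sSup (insert 0 ((fun τ => s τ - c_s) '' Ici (max t 0))) with hd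
  have hbdd : ∀ t, BddAbove (insert 0 ((fun τ => s τ - c_s) '' Ici (max t 0))) := by
    intro t
    refine ⟨max (M - c_s) 0, ?_⟩
    rintro x (rfl | ⟨τ, hτ, rfl⟩)
    · exact le_max_right _ _
    · have h0τ : (0:ℝ) ≤ τ := le_trans (le_max_right _ _) hτ
      have : s τ - c_s ≤ M - c_s := by linarith [hMbound τ h0τ]
      exact le_max_of_le_left this
  have hne : ∀ t, (insert (0:ℝ) ((fun τ => s τ - c_s) '' Ici (max t 0))).Nonempty :=
    fun t => ⟨0, mem_insert _ _⟩
  have d_nonneg : ∀ t, 0 ≤ d t := fun t => le_csSup (hbdd t) (mem_insert _ _)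
  have d_ge : ∀ t, 0 ≤ t → s t - c_s ≤ d t := by
    intro t ht
    exact le_csSup (hbdd t) (mem_insert_of_mem _ ⟨t, by simp [max_eq_left ht], rfl⟩)
  have d_anti : Antitone d := by
    intro t1 t2 h
    apply csSup_le_csSup (hbdd t1) (hne t2)
    exact insert_subset_insert (image_mono (Ici_subset_Ici.2 (max_le_max h le_rfl)))
  have d_small : ∀ ε, 0 < ε → ∃ T, 0 ≤ T ∧ ∀ t, T ≤ t → d t ≤ ε := by
    intro ε hε
    obtain ⟨T, hT0, hT⟩ := tail_lemma α hmono c_s s s' hs hineq ε hε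
    refine ⟨T, hT0, fun t ht => le_trans (d_anti ht) ?_⟩
    apply csSup_le (hne T)
    rintro x (rfl | ⟨τ, hτ, rfl⟩)
    · exact hε.le
    · have hTτ : T ≤ τ := le_trans (le_max_left _ _) hτ
      show s τ - c_s ≤ ε
      linarith [hT τ hTτ]
  have d_tendsto : Tendsto d atTop (nhds 0) := by
    rw [Metric.tendsto_atTop]
    intro ε hε
    obtain ⟨T, hT0, hT⟩ := d_small (ε/2) (by linarith)
    refine ⟨T, fun t ht => ?_⟩
    rw [Real.dist_eq, abs_of_nonneg (by linarith [d_nonneg t])]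
    · linarith [hT t ht]
  have hdint : ∀ a b : ℝ, IntervalIntegrable d MeasureTheory.volume a b :=
    fun a b => d_anti.intervalIntegrable
  set F : ℝ → ℝ := fun x => ∫ τ in (0:ℝ)..x, d τ with hF
  have hFcont : Continuous F := intervalIntegral.continuous_primitive hdint 0
  set g : ℝ → ℝ := fun t => ∫ τ in (t-1)..t, d τ with hg
  have hgF : ∀ t, g t = F t - F (t-1) :=
    fun t => (intervalIntegral.integral_interval_sub_left (hdint 0 t) (hdint 0 (t-1))).symm
  have hgcont : Continuous g := by
    have : g = fun t => F t - F (t-1) := funext hgF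
    rw [this]
    exact hFcont.sub (hFcont.comp (continuous_id.sub continuous_const))
  have hg_ge : ∀ t, d t ≤ g t := by
    intro t
    have h1 : (∫ _ in (t-1)..t, d t) ≤ ∫ τ in (t-1)..t, d τ :=
      intervalIntegral.integral_mono_on (by linarith) intervalIntegrable_const (hdint _ _)
        (fun x hx => d_anti hx.2)
    simpa using h1
  have hg_le : ∀ t, g t ≤ d (t-1) := by
    intro t
    have h1 : (∫ τ in (t-1)..t, d τ) ≤ ∫ _ in (t-1)..t, d (t-1) :=
      intervalIntegral.integral_mono_on (by linarith) (hdint _ _) intervalIntegrable_const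
        (fun x hx => d_anti hx.1)
    simpa using h1
  have hg_nonneg : ∀ t, 0 ≤ g t := fun t => le_trans (d_nonneg t) (hg_ge t)
  have hg_anti : Antitone g := by
    intro t1 t2 h
    have key : g t2 = ∫ x in (t1-1)..t1, d (x + (t2 - t1)) := by
      rw [intervalIntegral.integral_comp_add_right]
      have e1 : t1 - 1 + (t2 - t1) = t2 - 1 := by ring
      have e2 : t1 + (t2 - t1) = t2 := by ring
      rw [e1, e2]
    rw [key]
    have hint1 : IntervalIntegrable (fun x => d (x + (t2 - t1))) MeasureTheory.volume (t1-1) t1 := by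
      have := (d_anti.comp_monotone (monotone_id.add_const (t2 - t1))).intervalIntegrable
        (μ := MeasureTheory.volume) (a := t1 - 1) (b := t1)
      exact this
    apply intervalIntegral.integral_mono_on (by linarith) hint1 (hdint _ _)
    intro x _
    exact d_anti (by linarith)
  have hg_tendsto : Tendsto g atTop (nhds 0) := by
    apply tendsto_of_tendsto_of_tendsto_of_le_of_le tendsto_const_nhds
      (d_tendsto.comp (tendsto_atTop_add_const_right atTop (-1) tendsto_id))
      hg_nonneg
    intro t
    simpa [sub_eq_add_neg] using hg_le t
  -- now build β
  by_cases hr0 : s 0 - c_s ≤ 0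
  · refine ⟨fun r t => max r 0 * Real.exp (-(max t 0)), ?_, ?_, ?_, ?_⟩
    · exact ((continuous_fst.max continuous_const).mul
        (Real.continuous_exp.comp ((continuous_snd.max continuous_const).neg)))
    · intro t _
      constructor
      · intro a ha b hb hab
        simp only []
        rw [max_eq_left ha, max_eq_left (show (0:ℝ) ≤ b from hb)]
        exact mul_lt_mul_of_pos_right hab (Real.exp_pos _)
      · simp
    · intro r hr
      constructor
      · intro t1 _ t2 _ h12
        have : Real.exp (-(max t2 0)) ≤ Real.exp (-(max t1 0)) :=
          Real.exp_le_exp.2 (neg_le_neg (max_le_max h12 le_rfl))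
        exact mul_le_mul_of_nonneg_left this (le_max_right _ _)
      · have hmax : Tendsto (fun t : ℝ => max t 0) atTop atTop :=
          tendsto_atTop_mono (fun t => le_max_left t 0) tendsto_id
        have h1 : Tendsto (fun t : ℝ => Real.exp (-(max t 0))) atTop (nhds 0) :=
          Real.tendsto_exp_atBot.comp (tendsto_neg_atTop_atBot.comp hmax)
        simpa using h1.const_mul (max r 0)
    · intro t ht
      show s t ≤ max (s 0 - c_s) 0 * Real.exp (-(max t 0)) + c_s
      rw [max_eq_right hr0]
      simp only [zero_mul, zero_add]
      exact inv_lemma α hmono c_s s s' hs hineq c_s le_rfl 0 le_rfl (by linarith) t ht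
  · push_neg at hr0
    set r0 := s 0 - c_s with hr0def
    set G : ℝ → ℝ := fun t => g (max t 0) + Real.exp (-(max t 0)) with hG
    have hGcont : Continuous G :=
      (hgcont.comp (continuous_id.max continuous_const)).add
        (Real.continuous_exp.comp ((continuous_id.max continuous_const).neg))
    have hGpos : ∀ t, 0 < G t := fun t =>
      add_pos_of_nonneg_of_pos (hg_nonneg _) (Real.exp_pos _)
    have hGanti : Antitone G := by
      intro t1 t2 h
      have hm : max t1 0 ≤ max t2 0 := max_le_max h le_rfl
      exact add_le_add (hg_anti hm) (Real.exp_le_exp.2 (neg_le_neg hm))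
    have hGtendsto : Tendsto G atTop (nhds 0) := by
      have hmax : Tendsto (fun t : ℝ => max t 0) atTop atTop :=
        tendsto_atTop_mono (fun t => le_max_left t 0) tendsto_id
      have h1 : Tendsto (fun t : ℝ => Real.exp (-(max t 0))) atTop (nhds 0) :=
        Real.tendsto_exp_atBot.comp (tendsto_neg_atTop_atBot.comp hmax)
      have h2 := (hg_tendsto.comp hmax).add h1
      simpa using h2
    refine ⟨fun r t => max r 0 / r0 * G t, ?_, ?_, ?_, ?_⟩
    · exact (((continuous_fst.max continuous_const).div_const r0).mul
        (hGcont.comp continuous_snd))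
    · intro t _
      constructor
      · intro a ha b hb hab
        simp only []
        rw [max_eq_left ha, max_eq_left hb]
        have hc : 0 < G t / r0 := div_pos (hGpos t) hr0
        calc a / r0 * G t = a * (G t / r0) := by ring
          _ < b * (G t / r0) := mul_lt_mul_of_pos_right hab hc
          _ = b / r0 * G t := by ring
      · simp
    · intro r hr
      constructor
      · intro t1 _ t2 _ h12
        exact mul_le_mul_of_nonneg_left (hGanti h12)
          (div_nonneg (le_max_right _ _) hr0.le)
      · simpa using hGtendsto.const_mul (max r 0 / r0)
    · intro t ht
      show s t ≤ max r0 0 / r0 * G t + c_s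
      have h1 : max r0 0 = r0 := max_eq_left hr0.le
      simp only [h1]
      rw [div_self (ne_of_gt hr0), one_mul]
      have h2 : s t - c_s ≤ d t := d_ge t ht
      have h3 : d t ≤ g t := hg_ge t
      have h4 : G t = g t + Real.exp (-t) := by rw [hG]; simp [max_eq_left ht]
      rw [h4]
      have := Real.exp_pos (-t)
      linarith
end

section
/- Let V, η, σ ≥ 0 with η > 0, and let η̄ ∈ K∞ with inverse η̄⁻¹ ∈ K∞. If η‖e‖² ≤ V ≤ η̄(‖e‖) + σ, then ‖e‖² ≥ (η̄⁻¹(V/2))² - (η̄⁻¹(σ))² whenever V ≥ σ, and in all cases ‖e‖² ≥ max(0, (η̄⁻¹(V/2))² - (η̄⁻¹(σ))²). -/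
theorem lyapunov_lower_bound {n : ℕ}
    (ηb ηbinv : ℝ → ℝ)
    (hcont : Continuous ηb) (hmono : StrictMonoOn ηb (Set.Ici 0))
    (h0 : ηb 0 = 0) (hnonneg : ∀ x, 0 ≤ x → 0 ≤ ηb x)
    (hunb : Filter.Tendsto ηb Filter.atTop Filter.atTop)
    (hcont' : Continuous ηbinv) (hmono' : StrictMonoOn ηbinv (Set.Ici 0))
    (h0' : ηbinv 0 = 0) (hnonneg' : ∀ x, 0 ≤ x → 0 ≤ ηbinv x)
    (hunb' : Filter.Tendsto ηbinv Filter.atTop Filter.atTop)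
    (hlinv : ∀ x, 0 ≤ x → ηbinv (ηb x) = x)
    (hrinv : ∀ x, 0 ≤ x → ηb (ηbinv x) = x)
    (V η σ : ℝ) (hV : 0 ≤ V) (hη : 0 < η) (hσ : 0 ≤ σ)
    (e : EuclideanSpace ℝ (Fin n))
    (hlow : η * ‖e‖ ^ 2 ≤ V) (hup : V ≤ ηb ‖e‖ + σ) :
    (σ ≤ V → ‖e‖ ^ 2 ≥ (ηbinv (V / 2)) ^ 2 - (ηbinv σ) ^ 2) ∧
    ‖e‖ ^ 2 ≥ max 0 ((ηbinv (V / 2)) ^ 2 - (ηbinv σ) ^ 2) := by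
  have hmonoOn := hmono'.monotoneOn
  have he2 : (0:ℝ) ≤ ‖e‖^2 := by positivity
  have hne : (0:ℝ) ≤ ‖e‖ := norm_nonneg e
  have key : σ ≤ V → ‖e‖ ^ 2 ≥ (ηbinv (V / 2)) ^ 2 - (ηbinv σ) ^ 2 := by
    intro hσV
    have h1 : V - σ ≤ ηb ‖e‖ := by linarith
    have hVσ : (0:ℝ) ≤ V - σ := by linarith
    have h2 : ηbinv (V - σ) ≤ ‖e‖ := by
      have := hmonoOn (Set.mem_Ici.mpr hVσ) (Set.mem_Ici.mpr (hnonneg _ hne)) h1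
      rwa [hlinv _ hne] at this
    have h3 : ηbinv (V/2) ≤ max (ηbinv (V - σ)) (ηbinv σ) := by
      rcases le_total σ (V/2) with h | h
      · exact le_max_of_le_left (hmonoOn (Set.mem_Ici.mpr (by linarith)) (Set.mem_Ici.mpr hVσ) (by linarith))
      · exact le_max_of_le_right (hmonoOn (Set.mem_Ici.mpr (by linarith)) (Set.mem_Ici.mpr hσ) h)
    have hA : 0 ≤ ηbinv (V - σ) := hnonneg' _ hVσ
    have hB : 0 ≤ ηbinv σ := hnonneg' _ hσ
    have hC : 0 ≤ ηbinv (V/2) := hnonneg' _ (by linarith)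
    rcases le_total (ηbinv (V - σ)) (ηbinv σ) with hab | hab
    · rw [max_eq_right hab] at h3
      nlinarith
    · rw [max_eq_left hab] at h3
      nlinarith
  refine ⟨key, ?_⟩
  rcases le_total σ V with h | h
  · exact max_le he2 (key h)
  · have hm : ηbinv (V/2) ≤ ηbinv σ :=
      hmonoOn (Set.mem_Ici.mpr (by linarith)) (Set.mem_Ici.mpr hσ) (by linarith)
    have hC : 0 ≤ ηbinv (V/2) := hnonneg' _ (by linarith)
    have : (ηbinv (V/2))^2 - (ηbinv σ)^2 ≤ 0 := by nlinarith
    exact max_le he2 (by linarith)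
end

section
/- Let R, R_d ∈ SO(3), e_R = ½(Rᵀ R_d - R_dᵀ R)^∨, and Ψ = ½tr(I₃ - Rᵀ R_d). Suppose R_d is constant and R evolves by Ṙ = R ω^∧ for angular velocity ω ∈ ℝ³, and define e_ω = Rᵀ R_d ω_d - ω with ω_d = 0. Then Ψ̇ = e_ωᵀ e_R, i.e., d/dt [½tr(I₃ - Rᵀ R_d)] = -ωᵀ e_R = e_ωᵀ e_R. -/
open Matrix

/-- The hat map sending a vector in ℝ³ to the corresponding skew-symmetric matrix. -/
def hat (v : Fin 3 → ℝ) : Matrix (Fin 3) (Fin 3) ℝ :=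
  !![0, -v 2, v 1; v 2, 0, -v 0; -v 1, v 0, 0]

/-- Inverse of the hat map. -/
def vee (A : Matrix (Fin 3) (Fin 3) ℝ) : Fin 3 → ℝ :=
  ![A 2 1, A 0 2, A 1 0]

theorem attitude_error_derivative_regulation
    (R : ℝ → Matrix (Fin 3) (Fin 3) ℝ) (ω : ℝ → Fin 3 → ℝ)
    (Rd : Matrix (Fin 3) (Fin 3) ℝ)
    (hRSO : ∀ t, (R t).transpose * R t = 1 ∧ (R t).det = 1)
    (hRdSO : Rd.transpose * Rd = 1 ∧ Rd.det = 1)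
    (hkin : ∀ t, ∀ i j, HasDerivAt (fun τ => R τ i j) ((R t * hat (ω t)) i j) t)
    (eR : ℝ → Fin 3 → ℝ)
    (heR : ∀ t, eR t = vee ((1 / 2 : ℝ) • ((R t).transpose * Rd - Rd.transpose * R t)))
    (eω : ℝ → Fin 3 → ℝ) (heω : ∀ t, eω t = -ω t) (t : ℝ) :
    HasDerivAt (fun τ => (1 / 2) * Matrix.trace (1 - (R τ).transpose * Rd))
      (dotProduct (eω t) (eR t)) t := by
  have hsum : HasDerivAt (fun tau => ∑ i : Fin 3, ∑ j : Fin 3, R tau j i * Rd j i)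
      (∑ i : Fin 3, ∑ j : Fin 3, (R t * hat (ω t)) j i * Rd j i) t := by
    apply HasDerivAt.fun_sum; intro i _
    apply HasDerivAt.fun_sum; intro j _
    exact (hkin t j i).mul_const _
  have h2 := ((hasDerivAt_const t (3:ℝ)).fun_sub hsum).const_mul (1/2 : ℝ)
  have hfun : (fun tau => (1/2 : ℝ) * Matrix.trace (1 - (R tau).transpose * Rd)) =
      fun tau => (1/2:ℝ) * ((3:ℝ) - ∑ i : Fin 3, ∑ j : Fin 3, R tau j i * Rd j i) := by
    funext tau
    simp [Matrix.trace, Matrix.diag, Matrix.sub_apply, Matrix.mul_apply, Matrix.one_apply,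
      Fin.sum_univ_succ, Matrix.transpose_apply]
    try ring
  rw [hfun]
  convert h2 using 1
  · rfl
  · rfl
  rw [heR, heω]
  simp [vee, hat, Matrix.mul_apply, Matrix.sub_apply, Matrix.transpose_apply,
    dotProduct, Fin.sum_univ_succ, Matrix.smul_apply]
  try ring
end

section
/- Let R, R_d ∈ SO(3) evolve with body angular velocities ω, ω_d, and define e_R = ½(Rᵀ R_d - R_dᵀ R)^∨, e_ω = Rᵀ R_d ω_d - ω, and C = ½[tr(Rᵀ R_d)·I₃ - Rᵀ R_d]. Then ė_R = C·e_ω. -/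
open Matrix

theorem attitude_error_kinematics
    (R Rd : ℝ → Matrix (Fin 3) (Fin 3) ℝ) (ω ωd : ℝ → Fin 3 → ℝ)
    (hRSO : ∀ t, (R t).transpose * R t = 1 ∧ (R t).det = 1)
    (hRdSO : ∀ t, (Rd t).transpose * Rd t = 1 ∧ (Rd t).det = 1)
    (hkin : ∀ t, ∀ i j, HasDerivAt (fun τ => R τ i j) ((R t * hat (ω t)) i j) t)
    (hkind : ∀ t, ∀ i j, HasDerivAt (fun τ => Rd τ i j) ((Rd t * hat (ωd t)) i j) t)
    (eR : ℝ → Fin 3 → ℝ)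
    (heR : ∀ t, eR t = vee ((1 / 2 : ℝ) • ((R t).transpose * Rd t - (Rd t).transpose * R t)))
    (eω : ℝ → Fin 3 → ℝ)
    (heω : ∀ t, eω t = ((R t).transpose * Rd t).mulVec (ωd t) - ω t)
    (C : ℝ → Matrix (Fin 3) (Fin 3) ℝ)
    (hC : ∀ t, C t = (1 / 2 : ℝ) •
      (Matrix.trace ((R t).transpose * Rd t) • (1 : Matrix (Fin 3) (Fin 3) ℝ)
        - (R t).transpose * Rd t))
    (t : ℝ) (i : Fin 3) :
    HasDerivAt (fun τ => eR τ i) ((C t).mulVec (eω t) i) t := by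
  have hAA : R t * (R t).transpose = 1 := mul_eq_one_comm.mp (hRSO t).1
  have horth : ((R t).transpose * Rd t)ᵀ * ((R t).transpose * Rd t) = 1 := by
    rw [Matrix.transpose_mul, Matrix.transpose_transpose, Matrix.mul_assoc,
      ← Matrix.mul_assoc (R t), hAA, Matrix.one_mul, (hRdSO t).1]
  have hdet : ((R t).transpose * Rd t).det = 1 := by
    rw [Matrix.det_mul, Matrix.det_transpose, (hRSO t).2, (hRdSO t).2, mul_one]
  have hadj : ((R t).transpose * Rd t).adjugate = ((R t).transpose * Rd t)ᵀ := by
    have h2 : ((R t).transpose * Rd t) * ((R t).transpose * Rd t).adjugate = 1 := by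
      rw [Matrix.mul_adjugate, hdet, one_smul]
    calc ((R t).transpose * Rd t).adjugate
        = (((R t).transpose * Rd t)ᵀ * ((R t).transpose * Rd t)) * ((R t).transpose * Rd t).adjugate := by
          rw [horth, Matrix.one_mul]
      _ = ((R t).transpose * Rd t)ᵀ * (((R t).transpose * Rd t) * ((R t).transpose * Rd t).adjugate) := by
          rw [Matrix.mul_assoc]
      _ = ((R t).transpose * Rd t)ᵀ := by rw [h2, Matrix.mul_one]
  have hc00 : (R t 0 0 * Rd t 0 0 + R t 1 0 * Rd t 1 0 + R t 2 0 * Rd t 2 0) = ((R t 0 1 * Rd t 0 1 + R t 1 1 * Rd t 1 1 + R t 2 1 * Rd t 2 1) * (R t 0 2 * Rd t 0 2 + R t 1 2 * Rd t 1 2 + R t 2 2 * Rd t 2 2) - (R t 0 1 * Rd t 0 2 + R t 1 1 * Rd t 1 2 + R t 2 1 * Rd t 2 2) * (R t 0 2 * Rd t 0 1 + R t 1 2 * Rd t 1 1 + R t 2 2 * Rd t 2 1)) := by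
    have h := congrFun (congrFun hadj 0) 0
    simp [Matrix.adjugate_apply, Matrix.det_fin_three, Pi.single_apply,
      Matrix.transpose_apply, Matrix.mul_apply, Fin.sum_univ_three] at h
    linear_combination -h
  have hc01 : (R t 0 1 * Rd t 0 0 + R t 1 1 * Rd t 1 0 + R t 2 1 * Rd t 2 0) = -((R t 0 0 * Rd t 0 1 + R t 1 0 * Rd t 1 1 + R t 2 0 * Rd t 2 1) * (R t 0 2 * Rd t 0 2 + R t 1 2 * Rd t 1 2 + R t 2 2 * Rd t 2 2) - (R t 0 0 * Rd t 0 2 + R t 1 0 * Rd t 1 2 + R t 2 0 * Rd t 2 2) * (R t 0 2 * Rd t 0 1 + R t 1 2 * Rd t 1 1 + R t 2 2 * Rd t 2 1)) := by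
    have h := congrFun (congrFun hadj 0) 1
    simp [Matrix.adjugate_apply, Matrix.det_fin_three, Pi.single_apply,
      Matrix.transpose_apply, Matrix.mul_apply, Fin.sum_univ_three] at h
    linear_combination -h
  have hc02 : (R t 0 2 * Rd t 0 0 + R t 1 2 * Rd t 1 0 + R t 2 2 * Rd t 2 0) = ((R t 0 0 * Rd t 0 1 + R t 1 0 * Rd t 1 1 + R t 2 0 * Rd t 2 1) * (R t 0 1 * Rd t 0 2 + R t 1 1 * Rd t 1 2 + R t 2 1 * Rd t 2 2) - (R t 0 0 * Rd t 0 2 + R t 1 0 * Rd t 1 2 + R t 2 0 * Rd t 2 2) * (R t 0 1 * Rd t 0 1 + R t 1 1 * Rd t 1 1 + R t 2 1 * Rd t 2 1)) := by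
    have h := congrFun (congrFun hadj 0) 2
    simp [Matrix.adjugate_apply, Matrix.det_fin_three, Pi.single_apply,
      Matrix.transpose_apply, Matrix.mul_apply, Fin.sum_univ_three] at h
    linear_combination -h
  have hc10 : (R t 0 0 * Rd t 0 1 + R t 1 0 * Rd t 1 1 + R t 2 0 * Rd t 2 1) = -((R t 0 1 * Rd t 0 0 + R t 1 1 * Rd t 1 0 + R t 2 1 * Rd t 2 0) * (R t 0 2 * Rd t 0 2 + R t 1 2 * Rd t 1 2 + R t 2 2 * Rd t 2 2) - (R t 0 1 * Rd t 0 2 + R t 1 1 * Rd t 1 2 + R t 2 1 * Rd t 2 2) * (R t 0 2 * Rd t 0 0 + R t 1 2 * Rd t 1 0 + R t 2 2 * Rd t 2 0)) := by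
    have h := congrFun (congrFun hadj 1) 0
    simp [Matrix.adjugate_apply, Matrix.det_fin_three, Pi.single_apply,
      Matrix.transpose_apply, Matrix.mul_apply, Fin.sum_univ_three] at h
    linear_combination -h
  have hc11 : (R t 0 1 * Rd t 0 1 + R t 1 1 * Rd t 1 1 + R t 2 1 * Rd t 2 1) = ((R t 0 0 * Rd t 0 0 + R t 1 0 * Rd t 1 0 + R t 2 0 * Rd t 2 0) * (R t 0 2 * Rd t 0 2 + R t 1 2 * Rd t 1 2 + R t 2 2 * Rd t 2 2) - (R t 0 0 * Rd t 0 2 + R t 1 0 * Rd t 1 2 + R t 2 0 * Rd t 2 2) * (R t 0 2 * Rd t 0 0 + R t 1 2 * Rd t 1 0 + R t 2 2 * Rd t 2 0)) := by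
    have h := congrFun (congrFun hadj 1) 1
    simp [Matrix.adjugate_apply, Matrix.det_fin_three, Pi.single_apply,
      Matrix.transpose_apply, Matrix.mul_apply, Fin.sum_univ_three] at h
    linear_combination -h
  have hc12 : (R t 0 2 * Rd t 0 1 + R t 1 2 * Rd t 1 1 + R t 2 2 * Rd t 2 1) = -((R t 0 0 * Rd t 0 0 + R t 1 0 * Rd t 1 0 + R t 2 0 * Rd t 2 0) * (R t 0 1 * Rd t 0 2 + R t 1 1 * Rd t 1 2 + R t 2 1 * Rd t 2 2) - (R t 0 0 * Rd t 0 2 + R t 1 0 * Rd t 1 2 + R t 2 0 * Rd t 2 2) * (R t 0 1 * Rd t 0 0 + R t 1 1 * Rd t 1 0 + R t 2 1 * Rd t 2 0)) := by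
    have h := congrFun (congrFun hadj 1) 2
    simp [Matrix.adjugate_apply, Matrix.det_fin_three, Pi.single_apply,
      Matrix.transpose_apply, Matrix.mul_apply, Fin.sum_univ_three] at h
    linear_combination -h
  have hc20 : (R t 0 0 * Rd t 0 2 + R t 1 0 * Rd t 1 2 + R t 2 0 * Rd t 2 2) = ((R t 0 1 * Rd t 0 0 + R t 1 1 * Rd t 1 0 + R t 2 1 * Rd t 2 0) * (R t 0 2 * Rd t 0 1 + R t 1 2 * Rd t 1 1 + R t 2 2 * Rd t 2 1) - (R t 0 1 * Rd t 0 1 + R t 1 1 * Rd t 1 1 + R t 2 1 * Rd t 2 1) * (R t 0 2 * Rd t 0 0 + R t 1 2 * Rd t 1 0 + R t 2 2 * Rd t 2 0)) := by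
    have h := congrFun (congrFun hadj 2) 0
    simp [Matrix.adjugate_apply, Matrix.det_fin_three, Pi.single_apply,
      Matrix.transpose_apply, Matrix.mul_apply, Fin.sum_univ_three] at h
    linear_combination -h
  have hc21 : (R t 0 1 * Rd t 0 2 + R t 1 1 * Rd t 1 2 + R t 2 1 * Rd t 2 2) = -((R t 0 0 * Rd t 0 0 + R t 1 0 * Rd t 1 0 + R t 2 0 * Rd t 2 0) * (R t 0 2 * Rd t 0 1 + R t 1 2 * Rd t 1 1 + R t 2 2 * Rd t 2 1) - (R t 0 0 * Rd t 0 1 + R t 1 0 * Rd t 1 1 + R t 2 0 * Rd t 2 1) * (R t 0 2 * Rd t 0 0 + R t 1 2 * Rd t 1 0 + R t 2 2 * Rd t 2 0)) := by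
    have h := congrFun (congrFun hadj 2) 1
    simp [Matrix.adjugate_apply, Matrix.det_fin_three, Pi.single_apply,
      Matrix.transpose_apply, Matrix.mul_apply, Fin.sum_univ_three] at h
    linear_combination -h
  have hc22 : (R t 0 2 * Rd t 0 2 + R t 1 2 * Rd t 1 2 + R t 2 2 * Rd t 2 2) = ((R t 0 0 * Rd t 0 0 + R t 1 0 * Rd t 1 0 + R t 2 0 * Rd t 2 0) * (R t 0 1 * Rd t 0 1 + R t 1 1 * Rd t 1 1 + R t 2 1 * Rd t 2 1) - (R t 0 0 * Rd t 0 1 + R t 1 0 * Rd t 1 1 + R t 2 0 * Rd t 2 1) * (R t 0 1 * Rd t 0 0 + R t 1 1 * Rd t 1 0 + R t 2 1 * Rd t 2 0)) := by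
    have h := congrFun (congrFun hadj 2) 2
    simp [Matrix.adjugate_apply, Matrix.det_fin_three, Pi.single_apply,
      Matrix.transpose_apply, Matrix.mul_apply, Fin.sum_univ_three] at h
    linear_combination -h
  fin_cases i
  · -- i = 0
    have hfun : (fun τ => eR τ (0 : Fin 3))
        = fun τ => (1/2:ℝ) * ((∑ k, R τ k 2 * Rd τ k 1) - (∑ k, Rd τ k 2 * R τ k 1)) := by
      funext τ
      rw [heR τ]
      simp [vee, Matrix.mul_apply, Fin.sum_univ_three, Matrix.smul_apply, Matrix.sub_apply,
        Matrix.transpose_apply]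
    have hd : HasDerivAt (fun τ => eR τ (0 : Fin 3))
        ((1/2:ℝ) * ((∑ k, ((R t * hat (ω t)) k 2 * Rd t k 1 + R t k 2 * (Rd t * hat (ωd t)) k 1))
          - (∑ k, ((Rd t * hat (ωd t)) k 2 * R t k 1 + Rd t k 2 * (R t * hat (ω t)) k 1)))) t := by
      rw [hfun]
      exact (((HasDerivAt.fun_sum (fun k _ => (hkin t k 2).mul (hkind t k 1))).sub
        (HasDerivAt.fun_sum (fun k _ => (hkind t k 2).mul (hkin t k 1)))).const_mul (1/2:ℝ))
    convert hd using 1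
    · rfl
    rw [hC t, heω t]
    simp [Matrix.mulVec, dotProduct, Matrix.mul_apply, Fin.sum_univ_three,
      Matrix.smul_apply, Matrix.sub_apply, Matrix.one_apply, Matrix.trace_fin_three,
      Matrix.transpose_apply, hat, Pi.sub_apply, smul_eq_mul]
    linear_combination (ωd t 1 / 2) * hc01 + (ωd t 2 / 2) * hc02 - (ωd t 0 / 2) * hc11 - (ωd t 0 / 2) * hc22
  · -- i = 1
    have hfun : (fun τ => eR τ (1 : Fin 3))
        = fun τ => (1/2:ℝ) * ((∑ k, R τ k 0 * Rd τ k 2) - (∑ k, Rd τ k 0 * R τ k 2)) := by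
      funext τ
      rw [heR τ]
      simp [vee, Matrix.mul_apply, Fin.sum_univ_three, Matrix.smul_apply, Matrix.sub_apply,
        Matrix.transpose_apply]
    have hd : HasDerivAt (fun τ => eR τ (1 : Fin 3))
        ((1/2:ℝ) * ((∑ k, ((R t * hat (ω t)) k 0 * Rd t k 2 + R t k 0 * (Rd t * hat (ωd t)) k 2))
          - (∑ k, ((Rd t * hat (ωd t)) k 0 * R t k 2 + Rd t k 0 * (R t * hat (ω t)) k 2)))) t := by
      rw [hfun]
      exact (((HasDerivAt.fun_sum (fun k _ => (hkin t k 0).mul (hkind t k 2))).sub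
        (HasDerivAt.fun_sum (fun k _ => (hkind t k 0).mul (hkin t k 2)))).const_mul (1/2:ℝ))
    convert hd using 1
    · rfl
    rw [hC t, heω t]
    simp [Matrix.mulVec, dotProduct, Matrix.mul_apply, Fin.sum_univ_three,
      Matrix.smul_apply, Matrix.sub_apply, Matrix.one_apply, Matrix.trace_fin_three,
      Matrix.transpose_apply, hat, Pi.sub_apply, smul_eq_mul]
    linear_combination -(ωd t 1 / 2) * hc00 + (ωd t 0 / 2) * hc10 + (ωd t 2 / 2) * hc12 - (ωd t 1 / 2) * hc22
  · -- i = 2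
    have hfun : (fun τ => eR τ (2 : Fin 3))
        = fun τ => (1/2:ℝ) * ((∑ k, R τ k 1 * Rd τ k 0) - (∑ k, Rd τ k 1 * R τ k 0)) := by
      funext τ
      rw [heR τ]
      simp [vee, Matrix.mul_apply, Fin.sum_univ_three, Matrix.smul_apply, Matrix.sub_apply,
        Matrix.transpose_apply]
    have hd : HasDerivAt (fun τ => eR τ (2 : Fin 3))
        ((1/2:ℝ) * ((∑ k, ((R t * hat (ω t)) k 1 * Rd t k 0 + R t k 1 * (Rd t * hat (ωd t)) k 0))
          - (∑ k, ((Rd t * hat (ωd t)) k 1 * R t k 0 + Rd t k 1 * (R t * hat (ω t)) k 0)))) t := by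
      rw [hfun]
      exact (((HasDerivAt.fun_sum (fun k _ => (hkin t k 1).mul (hkind t k 0))).sub
        (HasDerivAt.fun_sum (fun k _ => (hkind t k 1).mul (hkin t k 0)))).const_mul (1/2:ℝ))
    convert hd using 1
    · rfl
    rw [hC t, heω t]
    simp [Matrix.mulVec, dotProduct, Matrix.mul_apply, Fin.sum_univ_three,
      Matrix.smul_apply, Matrix.sub_apply, Matrix.one_apply, Matrix.trace_fin_three,
      Matrix.transpose_apply, hat, Pi.sub_apply, smul_eq_mul]
    linear_combination -(ωd t 2 / 2) * hc00 - (ωd t 2 / 2) * hc11 + (ωd t 0 / 2) * hc20 + (ωd t 1 / 2) * hc21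
end

section
/- Let E₁ = {p : (p - p̄₁)ᵀ Q₁⁻¹ (p - p̄₁) ≤ 1} and E₂ = {p : (p - p̄₂)ᵀ Q₂⁻¹ (p - p̄₂) ≤ 1} be two ellipsoids in ℝ³ with positive definite shape matrices Q₁, Q₂. Define Q̄ = Σ_{i,j} (Q_i/√(tr Q_i))·√(tr Q_j) = (√(tr Q₁) + √(tr Q₂))·(Q₁/√(tr Q₁) + Q₂/√(tr Q₂)). If (p̄₁ - p̄₂)ᵀ Q̄⁻¹ (p̄₁ - p̄₂) > 1, then E₁ ∩ E₂ = ∅. -/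
open Matrix

lemma cs_aux {A : Matrix (Fin 3) (Fin 3) ℝ} (hA : A.PosSemidef) (x y : Fin 3 → ℝ) :
    (x ⬝ᵥ A.mulVec y) ^ 2 ≤ (x ⬝ᵥ A.mulVec x) * (y ⬝ᵥ A.mulVec y) := by
  obtain ⟨B, rfl⟩ : ∃ B : Matrix (Fin 3) (Fin 3) ℝ, A = Bᴴ * B := by
    open scoped MatrixOrder in exact CStarAlgebra.nonneg_iff_eq_star_mul_self.mp hA.nonneg
  have key : ∀ u v : Fin 3 → ℝ, u ⬝ᵥ (Bᴴ * B).mulVec v = (B *ᵥ u) ⬝ᵥ (B *ᵥ v) := by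
    intro u v
    have hBt : Bᴴ = Bᵀ := by ext i j; simp [conjTranspose_apply]
    rw [hBt, ← mulVec_mulVec, dotProduct_mulVec, vecMul_transpose]
  rw [key, key, key]
  simpa [dotProduct, sq] using
    Finset.sum_mul_sq_le_sq_mul_sq Finset.univ (B *ᵥ x) (B *ᵥ y)

lemma posdef_smul {c : ℝ} {A : Matrix (Fin 3) (Fin 3) ℝ} (hc : 0 < c) (hA : A.PosDef) :
    (c • A).PosDef := by
  refine ⟨?_, fun x hx => ?_⟩
  · unfold Matrix.IsHermitian
    rw [conjTranspose_smul, hA.1.eq]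
    simp
  · exact (hA.smul hc).2 hx

lemma trace_pos_of_posdef {A : Matrix (Fin 3) (Fin 3) ℝ} (hA : A.PosDef) :
    0 < A.trace := by
  have h : ∀ i, 0 < A i i := by
    intro i
    have hne : (Pi.single i 1 : Fin 3 → ℝ) ≠ 0 := by
      intro h
      have := congrFun h i
      simp at this
    simpa using hA.dotProduct_mulVec_pos hne
  rw [Matrix.trace]
  exact Finset.sum_pos (fun i _ => h i) Finset.univ_nonempty

theorem ellipsoid_separation
    (p1 p2 : Fin 3 → ℝ) (Q1 Q2 : Matrix (Fin 3) (Fin 3) ℝ)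
    (hQ1 : Q1.PosDef) (hQ2 : Q2.PosDef)
    (Qbar : Matrix (Fin 3) (Fin 3) ℝ)
    (hQbar : Qbar = (Real.sqrt (Matrix.trace Q1) + Real.sqrt (Matrix.trace Q2)) •
      ((Real.sqrt (Matrix.trace Q1))⁻¹ • Q1 + (Real.sqrt (Matrix.trace Q2))⁻¹ • Q2))
    (hsep : dotProduct (p1 - p2) (Qbar⁻¹.mulVec (p1 - p2)) > 1) :
    {p : Fin 3 → ℝ | dotProduct (p - p1) (Q1⁻¹.mulVec (p - p1)) ≤ 1} ∩
      {p : Fin 3 → ℝ | dotProduct (p - p2) (Q2⁻¹.mulVec (p - p2)) ≤ 1} = ∅ := by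
  rw [Set.eq_empty_iff_forall_notMem]
  rintro p ⟨h1, h2⟩
  simp only [Set.mem_setOf_eq] at h1 h2
  set a := Real.sqrt (Matrix.trace Q1) with ha_def
  set b := Real.sqrt (Matrix.trace Q2) with hb_def
  have ha : 0 < a := Real.sqrt_pos.mpr (trace_pos_of_posdef hQ1)
  have hb : 0 < b := Real.sqrt_pos.mpr (trace_pos_of_posdef hQ2)
  have hQbarPD : Qbar.PosDef := by
    rw [hQbar]
    exact posdef_smul (by positivity)
      ((posdef_smul (by positivity) hQ1).add (posdef_smul (by positivity) hQ2))
  have hdet : IsUnit Qbar.det := isUnit_iff_ne_zero.mpr hQbarPD.det_pos.ne'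
  have hmul : Qbar * Qbar⁻¹ = 1 := mul_nonsing_inv _ hdet
  set d := p1 - p2 with hd_def
  set w := Qbar⁻¹.mulVec d with hw_def
  set s := d ⬝ᵥ Qbar⁻¹.mulVec d with hs_def
  set α := w ⬝ᵥ Q1.mulVec w with hα_def
  set β := w ⬝ᵥ Q2.mulVec w with hβ_def
  have hα0 : 0 ≤ α := hQ1.posSemidef.dotProduct_mulVec_nonneg w
  have hβ0 : 0 ≤ β := hQ2.posSemidef.dotProduct_mulVec_nonneg w
  -- Cauchy-Schwarz bounds
  have bound : ∀ (Q : Matrix (Fin 3) (Fin 3) ℝ) (hQ : Q.PosDef) (u : Fin 3 → ℝ),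
      u ⬝ᵥ Q⁻¹.mulVec u ≤ 1 → u ⬝ᵥ w ≤ Real.sqrt (w ⬝ᵥ Q.mulVec w) := by
    intro Q hQ u hu
    have hdQ : IsUnit Q.det := isUnit_iff_ne_zero.mpr hQ.det_pos.ne'
    have h1 : Q⁻¹.mulVec (Q.mulVec w) = w := by
      rw [mulVec_mulVec, nonsing_inv_mul _ hdQ, one_mulVec]
    have hcs := cs_aux hQ.inv.posSemidef u (Q.mulVec w)
    rw [h1] at hcs
    have h2 : (Q.mulVec w) ⬝ᵥ w = w ⬝ᵥ Q.mulVec w := dotProduct_comm _ _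
    rw [h2] at hcs
    have h3 : (u ⬝ᵥ w) ^ 2 ≤ w ⬝ᵥ Q.mulVec w := by
      calc (u ⬝ᵥ w) ^ 2 ≤ (u ⬝ᵥ Q⁻¹.mulVec u) * (w ⬝ᵥ Q.mulVec w) := hcs
        _ ≤ 1 * (w ⬝ᵥ Q.mulVec w) := by
            apply mul_le_mul_of_nonneg_right hu (hQ.posSemidef.dotProduct_mulVec_nonneg w)
        _ = _ := one_mul _
    calc u ⬝ᵥ w ≤ |u ⬝ᵥ w| := le_abs_self _
      _ = Real.sqrt ((u ⬝ᵥ w) ^ 2) := (Real.sqrt_sq_eq_abs _).symm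
      _ ≤ Real.sqrt (w ⬝ᵥ Q.mulVec w) := Real.sqrt_le_sqrt h3
  have hu1 : (p1 - p) ⬝ᵥ Q1⁻¹.mulVec (p1 - p) ≤ 1 := by
    have : p1 - p = -(p - p1) := by ring_nf
    rw [this, mulVec_neg, neg_dotProduct, dotProduct_neg, neg_neg]
    exact h1
  have bu : (p1 - p) ⬝ᵥ w ≤ Real.sqrt α := bound Q1 hQ1 _ hu1
  have bv : (p - p2) ⬝ᵥ w ≤ Real.sqrt β := bound Q2 hQ2 _ h2
  have hsum : s ≤ Real.sqrt α + Real.sqrt β := by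
    have : d = (p1 - p) + (p - p2) := by rw [hd_def]; ring_nf
    calc s = d ⬝ᵥ w := rfl
      _ = (p1 - p) ⬝ᵥ w + (p - p2) ⬝ᵥ w := by rw [this, add_dotProduct]
      _ ≤ Real.sqrt α + Real.sqrt β := add_le_add bu bv
  -- s = w ⬝ᵥ Qbar *ᵥ w
  have hsw : w ⬝ᵥ Qbar.mulVec w = s := by
    have : Qbar.mulVec w = d := by
      rw [hw_def, mulVec_mulVec, hmul, one_mulVec]
    rw [this, dotProduct_comm]
  have hexp : w ⬝ᵥ Qbar.mulVec w = (a + b) * (a⁻¹ * α + b⁻¹ * β) := by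
    rw [hQbar]
    simp only [smul_mulVec, add_mulVec, dotProduct_smul, dotProduct_add, smul_eq_mul,
      ← ha_def, ← hb_def, ← hα_def, ← hβ_def]
  have hkey : (Real.sqrt α + Real.sqrt β) ^ 2 ≤ s := by
    rw [← hsw, hexp]
    set sa := Real.sqrt α with hsa_def
    set sb := Real.sqrt β with hsb_def
    have hsa : sa ^ 2 = α := Real.sq_sqrt hα0
    have hsb : sb ^ 2 = β := Real.sq_sqrt hβ0
    have e1 : a⁻¹ * α = α / a := by ring
    have e2 : b⁻¹ * β = β / b := by ring
    rw [e1, e2, div_add_div _ _ ha.ne' hb.ne', ← mul_div_assoc,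
      le_div_iff₀ (by positivity), ← hsa, ← hsb]
    nlinarith [sq_nonneg (a * sb - b * sa), Real.sqrt_nonneg α,
      Real.sqrt_nonneg β, mul_pos ha hb, ha.le, hb.le]
  have hs1 : s > 1 := hsep
  nlinarith [hsum, hkey, hs1, Real.sqrt_nonneg α, Real.sqrt_nonneg β]
end

section
/- For positive definite matrices Q₁, Q₂ and any unit vector u, √(uᵀ Q₁ u) + √(uᵀ Q₂ u) ≤ √(uᵀ Q̄ u), where Q̄ = (√(tr Q₁) + √(tr Q₂))·(Q₁/√(tr Q₁) + Q₂/√(tr Q₂)). -/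
open Matrix

theorem support_function_minkowski {n : ℕ}
    (Q1 Q2 : Matrix (Fin n) (Fin n) ℝ)
    (hQ1 : Q1.PosDef) (hQ2 : Q2.PosDef)
    (Qbar : Matrix (Fin n) (Fin n) ℝ)
    (hQbar : Qbar = (Real.sqrt (Matrix.trace Q1) + Real.sqrt (Matrix.trace Q2)) •
      ((Real.sqrt (Matrix.trace Q1))⁻¹ • Q1 + (Real.sqrt (Matrix.trace Q2))⁻¹ • Q2))
    (u : Fin n → ℝ) (hu : dotProduct u u = 1) :
    Real.sqrt (dotProduct u (Q1.mulVec u)) +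
      Real.sqrt (dotProduct u (Q2.mulVec u)) ≤
    Real.sqrt (dotProduct u (Qbar.mulVec u)) := by
  have hne : u ≠ 0 := by
    intro h
    simp [h, dotProduct] at hu
  have ha : 0 < dotProduct u (Q1.mulVec u) := by
    have := hQ1.dotProduct_mulVec_pos hne
    simpa using this
  have hb : 0 < dotProduct u (Q2.mulVec u) := by
    have := hQ2.dotProduct_mulVec_pos hne
    simpa using this
  have hn : 0 < n := by
    rcases Nat.eq_zero_or_pos n with h | h
    · subst h; exact absurd (Subsingleton.elim u 0) hne
    · exact h
  have : NeZero n := ⟨hn.ne'⟩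
  have htr : ∀ (Q : Matrix (Fin n) (Fin n) ℝ), Q.PosDef → 0 < Matrix.trace Q := by
    intro Q hQ
    rw [Matrix.trace]
    apply Finset.sum_pos
    · intro i _
      have hsingle : (Pi.single i 1 : Fin n → ℝ) ≠ 0 := by
        intro h
        have := congrFun h i
        simp at this
      have := hQ.dotProduct_mulVec_pos hsingle
      simpa [Matrix.mulVec_single, dotProduct, Pi.single_apply, Finset.sum_ite_eq,
        Matrix.diag] using this
    · exact Finset.univ_nonempty
  have ht1 : 0 < Matrix.trace Q1 := htr Q1 hQ1
  have ht2 : 0 < Matrix.trace Q2 := htr Q2 hQ2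
  set a := dotProduct u (Q1.mulVec u) with hadef
  set b := dotProduct u (Q2.mulVec u) with hbdef
  set s1 := Real.sqrt (Matrix.trace Q1) with hs1def
  set s2 := Real.sqrt (Matrix.trace Q2) with hs2def
  have hs1 : 0 < s1 := Real.sqrt_pos.2 ht1
  have hs2 : 0 < s2 := Real.sqrt_pos.2 ht2
  have hQbarform : dotProduct u (Qbar.mulVec u) = (s1 + s2) * (s1⁻¹ * a + s2⁻¹ * b) := by
    subst hQbar
    simp [Matrix.add_mulVec, Matrix.smul_mulVec, dotProduct_add,
      dotProduct_smul, smul_eq_mul, ← hadef, ← hbdef, mul_add]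
  rw [hQbarform]
  have hy : (0:ℝ) ≤ (s1 + s2) * (s1⁻¹ * a + s2⁻¹ * b) :=
    le_of_lt (mul_pos (add_pos hs1 hs2)
      (add_pos (mul_pos (inv_pos.2 hs1) ha) (mul_pos (inv_pos.2 hs2) hb)))
  rw [show Real.sqrt a + Real.sqrt b ≤ Real.sqrt ((s1 + s2) * (s1⁻¹ * a + s2⁻¹ * b)) ↔
      (Real.sqrt a + Real.sqrt b) ^ 2 ≤ (s1 + s2) * (s1⁻¹ * a + s2⁻¹ * b) from
    Real.le_sqrt (by positivity) hy]
  have hsa := Real.sqrt_nonneg a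
  have hsb := Real.sqrt_nonneg b
  have h1 : Real.sqrt a ^ 2 = a := Real.sq_sqrt ha.le
  have h2 : Real.sqrt b ^ 2 = b := Real.sq_sqrt hb.le
  have key : 2 * (s1 * s2) * (Real.sqrt a * Real.sqrt b) ≤ s2 ^ 2 * a + s1 ^ 2 * b := by
    nlinarith [sq_nonneg (s2 * Real.sqrt a - s1 * Real.sqrt b)]
  have expand : (Real.sqrt a + Real.sqrt b) ^ 2 = a + b + 2 * (Real.sqrt a * Real.sqrt b) := by
    ring_nf
    nlinarith [h1, h2]
  rw [expand]
  have hrhs : (s1 + s2) * (s1⁻¹ * a + s2⁻¹ * b)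
      = a + b + (s2 * a / s1 + s1 * b / s2) := by
    field_simp
    ring
  rw [hrhs]
  have : 2 * (Real.sqrt a * Real.sqrt b) ≤ s2 * a / s1 + s1 * b / s2 := by
    rw [div_add_div _ _ (ne_of_gt hs1) (ne_of_gt hs2), le_div_iff₀ (by positivity)]
    nlinarith [key]
  linarith
end

section
/- Let h: ℝⁿ → ℝ be continuously differentiable and let p: [0,∞) → ℝⁿ be a C¹ curve with h(p(0)) > 0. Let γ: ℝ → ℝ be locally Lipschitz with γ(0) = 0 and γ strictly increasing (class-K extended). If ∇h(p(t))·ṗ(t) + γ(h(p(t))) > 0 for all t ≥ 0, then h(p(t)) > 0 for all t ≥ 0. -/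
theorem barrier_forward_invariance {n : ℕ}
    (h : (Fin n → ℝ) → ℝ) (hh : ContDiff ℝ 1 h)
    (p : ℝ → Fin n → ℝ) (p' : ℝ → Fin n → ℝ)
    (hp : ∀ t, HasDerivAt p (p' t) t) (hp' : Continuous p')
    (γ : ℝ → ℝ) (hγlip : LocallyLipschitz γ) (hγ0 : γ 0 = 0)
    (hγmono : StrictMono γ)
    (hinit : h (p 0) > 0)
    (hbarrier : ∀ t, 0 ≤ t → fderiv ℝ h (p t) (p' t) + γ (h (p t)) > 0) :
    ∀ t, 0 ≤ t → h (p t) > 0 := by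
  set y : ℝ → ℝ := fun t => h (p t) with hy
  have hyd : ∀ t, HasDerivAt y (fderiv ℝ h (p t) (p' t)) t := fun t =>
    ((hh.differentiable one_ne_zero (p t)).hasFDerivAt).comp_hasDerivAt t (hp t)
  have hpc : Continuous p := continuous_iff_continuousAt.mpr fun t => (hp t).continuousAt
  have hycont : Continuous y := (hh.continuous).comp hpc
  intro t ht
  by_contra hle
  push_neg at hle
  set S : Set ℝ := Set.Icc 0 t ∩ {u | y u ≤ 0} with hS
  have hSne : S.Nonempty := ⟨t, ⟨ht, le_rfl⟩, hle⟩
  have hSbdd : BddBelow S := ⟨0, fun u hu => hu.1.1⟩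
  have hSclosed : IsClosed S := isClosed_Icc.inter (isClosed_le hycont continuous_const)
  set s : ℝ := sInf S with hs
  have hsS : s ∈ S := hSclosed.csInf_mem hSne hSbdd
  have hs0 : 0 ≤ s := hsS.1.1
  have hst : s ≤ t := hsS.1.2
  have hys : y s ≤ 0 := hsS.2
  have hspos : 0 < s := by
    rcases lt_or_eq_of_le hs0 with h1 | h1
    · exact h1
    · exact absurd hinit (by rw [← h1] at hys; simpa using not_lt.mpr hys)
  have hypos : ∀ u, 0 ≤ u → u < s → 0 < y u := by
    intro u hu0 hus
    by_contra hle'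
    push_neg at hle'
    exact absurd (csInf_le hSbdd ⟨⟨hu0, hus.le.trans hst⟩, hle'⟩) (not_le.mpr hus)
  have hys0 : y s = 0 := by
    refine le_antisymm hys ?_
    have h1 : Filter.Tendsto y (nhdsWithin s (Set.Iio s)) (nhds (y s)) :=
      (hycont.continuousAt).continuousWithinAt.tendsto
    refine ge_of_tendsto h1 ?_
    filter_upwards [Ioo_mem_nhdsLT_of_mem (Set.mem_Ioc.mpr ⟨hspos, le_rfl⟩)] with u hu
    exact (hypos u hu.1.le hu.2).le
  have hd : 0 < fderiv ℝ h (p s) (p' s) := by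
    have hb := hbarrier s hs0
    have h0 : h (p s) = 0 := hys0
    rw [h0, hγ0] at hb
    linarith
  have hslope : Filter.Tendsto (slope y s) (nhdsWithin s {s}ᶜ)
      (nhds (fderiv ℝ h (p s) (p' s))) := hasDerivAt_iff_tendsto_slope.mp (hyd s)
  have hev : ∀ᶠ u in nhdsWithin s {s}ᶜ, 0 < slope y s u :=
    hslope.eventually (eventually_gt_nhds hd)
  have hle' : nhdsWithin s (Set.Iio s) ≤ nhdsWithin s {s}ᶜ :=
    nhdsWithin_mono s (fun u hu => ne_of_lt hu)
  have hev2 : ∀ᶠ u in nhdsWithin s (Set.Iio s),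
      0 < slope y s u ∧ u ∈ Set.Ioo 0 s :=
    (hev.filter_mono hle').and
      (Filter.eventually_mem_set.mpr (Ioo_mem_nhdsLT_of_mem (Set.mem_Ioc.mpr ⟨hspos, le_rfl⟩)))
  rcases hev2.exists with ⟨u, hu1, hu2⟩
  have husneg : u - s < 0 := by linarith [hu2.2]
  have hyu : y u < 0 := by
    rw [slope_def_field, hys0, sub_zero] at hu1
    rcases div_pos_iff.mp hu1 with ⟨_, h2⟩ | ⟨h1, _⟩
    · linarith
    · exact h1
  exact absurd (hypos u hu2.1.le hu2.2) (not_lt.mpr hyu.le)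
end
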